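/- Let p be an odd prime and let u : ℤ/pℤ → ℂ be any CAZAC sequence. Then the maximum of |A_p(u)[m,n]| over all (m,n) ∈ (ℤ/pℤ × ℤ/pℤ) \ {(0,0)} is at least 1/√(p-1). -/

import Mathlib

open scoped BigOperators Classical

noncomputable section

/-- The Legendre symbol modulo `p`, viewed as a complex-valued function on `ZMod p`:
`1` on nonzero quadratic residues, `0` at `0`, `-1` on quadratic nonresidues. -/
def chi (p : ℕ) (k : ZMod p) : ℂ :=
  if k = 0 then 0 else if ∃ m : ZMod p, m ^ 2 = k then 1 else -1

/-- The Legendre symbol modulo `p`, viewed as an integer-valued function on `ZMod p`. -/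
def chiZ (p : ℕ) (k : ZMod p) : ℤ :=
  if k = 0 then 0 else if ∃ m : ZMod p, m ^ 2 = k then 1 else -1

/-- The discrete periodic (narrow band) ambiguity function
`A_p(u)[m,n] = (1/p) ∑_k u[k+m] conj(u[k]) e^{-2πi k n/p}`. -/
def ambig (p : ℕ) [NeZero p] (u : ZMod p → ℂ) (m n : ZMod p) : ℂ :=
  (1 / (p : ℂ)) * ∑ k : ZMod p,
    u (k + m) * (starRingEnd ℂ) (u k) *
      Complex.exp (-2 * Real.pi * Complex.I * (k.val : ℂ) * (n.val : ℂ) / (p : ℂ))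

/-- The Kloosterman sum `K[a,b;p] = ∑_{x ∈ (ℤ/pℤ)ˣ} e^{2πi(ax + b x⁻¹)/p}`. -/
def kloost (p : ℕ) [NeZero p] (a b : ℤ) : ℂ :=
  ∑ x : (ZMod p)ˣ,
    Complex.exp (2 * Real.pi * Complex.I *
      ((((a : ZMod p) * (x : ZMod p) + (b : ZMod p) * ((x⁻¹ : (ZMod p)ˣ) : ZMod p)).val : ℂ))
        / (p : ℂ))

/-- The Björck sequence of length `p` for a prime `p ≡ 1 (mod 4)`:
`u[k] = exp(iθχ(k))` with `θ = arccos (1/(1+√p))`. -/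
def bjorck1 (p : ℕ) (k : ZMod p) : ℂ :=
  Complex.exp (Complex.I * (Real.arccos (1 / (1 + Real.sqrt p)) : ℂ) * chi p k)

/-- The Björck sequence of length `p` for a prime `p ≡ 3 (mod 4)`:
`u[k] = exp(iφ)` with `φ = arccos ((1-p)/(1+p))` if `k` is a quadratic nonresidue,
and `u[k] = 1` otherwise. -/
def bjorck3 (p : ℕ) (k : ZMod p) : ℂ :=
  if ∀ m : ZMod p, m ^ 2 ≠ k then
    Complex.exp (Complex.I * (Real.arccos ((1 - (p : ℝ)) / (1 + (p : ℝ))) : ℂ))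
  else 1

end

section Helpers

open Finset Complex

private lemma aux_zmod_sum_val {p : ℕ} [NeZero p] (f : ℕ → ℂ) :
    ∑ n : ZMod p, f n.val = ∑ i ∈ Finset.range p, f i := by
  refine Finset.sum_nbij' (fun n => n.val) (fun i => (i : ZMod p)) ?_ ?_ ?_ ?_ ?_
  · intro n _; exact Finset.mem_range.mpr (ZMod.val_lt n)
  · intro i _; exact Finset.mem_univ _
  · intro n _; exact ZMod.natCast_rightInverse n
  · intro i hi; exact ZMod.val_cast_of_lt (Finset.mem_range.mp hi)
  · intro n _; rfl

private lemma aux_orth (p : ℕ) [NeZero p] (a : ℤ) :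
    ∑ n : ZMod p, Complex.exp (2 * Real.pi * Complex.I * a * (n.val : ℂ) / p)
      = if (p : ℤ) ∣ a then (p : ℂ) else 0 := by
  have hp0 : (p : ℂ) ≠ 0 := Nat.cast_ne_zero.mpr (NeZero.ne p)
  set z : ℂ := Complex.exp (2 * Real.pi * Complex.I * a / p) with hz
  have hterm : ∀ n : ZMod p,
      Complex.exp (2 * Real.pi * Complex.I * a * (n.val : ℂ) / p) = z ^ n.val := by
    intro n
    rw [hz, ← Complex.exp_nat_mul]
    ring_nf
  rw [Finset.sum_congr rfl (fun n _ => hterm n), aux_zmod_sum_val (fun i => z ^ i)]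
  have hzp : z ^ p = Complex.exp (2 * Real.pi * Complex.I * a) := by
    rw [hz, ← Complex.exp_nat_mul]
    field_simp
  by_cases hd : (p : ℤ) ∣ a
  · obtain ⟨b, rfl⟩ := hd
    have hz1 : z = 1 := by
      rw [hz]
      have harg : (((p : ℤ) * b : ℤ) : ℂ) / p = (b : ℂ) := by
        push_cast; field_simp
      have : (2 : ℂ) * Real.pi * Complex.I * (((p : ℤ) * b : ℤ) : ℂ) / p
          = (b : ℂ) * (2 * Real.pi * Complex.I) := by
        rw [mul_div_assoc, harg]; ring
      rw [this, Complex.exp_int_mul_two_pi_mul_I]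
    simp only [hz1, one_pow, Finset.sum_const, Finset.card_range, nsmul_eq_mul, mul_one]
    simp [Dvd.intro b rfl]
  · have hz1 : z ≠ 1 := by
      intro h
      rw [hz, Complex.exp_eq_one_iff] at h
      obtain ⟨n, hn⟩ := h
      apply hd
      refine ⟨n, ?_⟩
      have h2 : (a : ℂ) = p * n := by
        have h2pi : (2 : ℂ) * Real.pi * Complex.I ≠ 0 := by
          simp [Real.pi_ne_zero, Complex.I_ne_zero]
        field_simp at hn
        have key : (2 : ℂ) * Real.pi * Complex.I * a = 2 * Real.pi * Complex.I * (p * n) := by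
          rw [hn]
        exact mul_left_cancel₀ h2pi key
      exact_mod_cast h2
    rw [geom_sum_eq hz1, hzp]
    have : Complex.exp (2 * Real.pi * Complex.I * a) = 1 := by
      have := Complex.exp_int_mul_two_pi_mul_I a
      rw [← this]; ring_nf
    rw [this]
    simp [hd]

private lemma aux_parseval (p : ℕ) [NeZero p] (u : ZMod p → ℂ)
    (hCA : ∀ k : ZMod p, ‖u k‖ = 1) (m : ZMod p) :
    ∑ n : ZMod p, (Complex.normSq (ambig p u m n) : ℂ) = 1 := by
  have hp0 : (p : ℂ) ≠ 0 := Nat.cast_ne_zero.mpr (NeZero.ne p)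
  have hu : ∀ k : ZMod p, u k * (starRingEnd ℂ) (u k) = 1 := by
    intro k
    rw [Complex.mul_conj]
    norm_cast
    rw [← Complex.sq_norm, hCA k, one_pow]
  have hconj : ∀ n : ZMod p, (starRingEnd ℂ) (ambig p u m n) =
      (1 / (p : ℂ)) * ∑ j : ZMod p,
        (starRingEnd ℂ) (u (j + m)) * u j *
          Complex.exp (2 * Real.pi * Complex.I * (j.val : ℂ) * (n.val : ℂ) / (p : ℂ)) := by
    intro n
    rw [ambig, map_mul, map_sum]
    congr 1
    · simp
    · refine Finset.sum_congr rfl fun j _ => ?_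
      rw [map_mul, map_mul, RingHomInvPair.comp_apply_eq, ← Complex.exp_conj]
      congr 1
      simp only [map_div₀, map_mul, Complex.conj_I, map_neg, map_ofNat, Complex.conj_ofReal,
        Complex.conj_natCast]
      ring
  have key : ∀ n : ZMod p, (Complex.normSq (ambig p u m n) : ℂ) =
      (1 / (p : ℂ)^2) * ∑ k : ZMod p, ∑ j : ZMod p,
        (u (k + m) * (starRingEnd ℂ) (u k) * ((starRingEnd ℂ) (u (j + m)) * u j)) *
          Complex.exp (2 * Real.pi * Complex.I * ((j.val : ℤ) - (k.val : ℤ)) * (n.val : ℂ) / p) := by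
    intro n
    rw [← Complex.mul_conj, hconj n, ambig, mul_mul_mul_comm, Finset.sum_mul_sum]
    congr 1
    · field_simp
    · refine Finset.sum_congr rfl fun k _ => Finset.sum_congr rfl fun j _ => ?_
      rw [mul_mul_mul_comm, ← Complex.exp_add]
      congr 2
      push_cast
      ring
  rw [Finset.sum_congr rfl fun n _ => key n, ← Finset.mul_sum]
  have swap : ∑ n : ZMod p, ∑ k : ZMod p, ∑ j : ZMod p,
      (u (k + m) * (starRingEnd ℂ) (u k) * ((starRingEnd ℂ) (u (j + m)) * u j)) *
        Complex.exp (2 * Real.pi * Complex.I * ((j.val : ℤ) - (k.val : ℤ)) * (n.val : ℂ) / p)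
      = ∑ k : ZMod p, ∑ j : ZMod p,
      (u (k + m) * (starRingEnd ℂ) (u k) * ((starRingEnd ℂ) (u (j + m)) * u j)) *
        (if ((p:ℤ)) ∣ ((j.val : ℤ) - (k.val : ℤ)) then (p : ℂ) else 0) := by
    rw [Finset.sum_comm]
    refine Finset.sum_congr rfl fun k _ => ?_
    rw [Finset.sum_comm]
    refine Finset.sum_congr rfl fun j _ => ?_
    have ho := aux_orth p ((j.val : ℤ) - (k.val : ℤ))
    push_cast at ho
    rw [← Finset.mul_sum]
    push_cast
    rw [ho]
  rw [swap]
  have hdiag : ∀ k j : ZMod p, ((p:ℤ) ∣ ((j.val:ℤ) - k.val)) ↔ j = k := by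
    intro k j
    rw [← ZMod.intCast_zmod_eq_zero_iff_dvd]
    push_cast
    rw [ZMod.natCast_val, ZMod.natCast_val, ZMod.cast_id, ZMod.cast_id, sub_eq_zero]
  have hinner : ∀ k : ZMod p, ∑ j : ZMod p,
      (u (k + m) * (starRingEnd ℂ) (u k) * ((starRingEnd ℂ) (u (j + m)) * u j)) *
        (if ((p:ℤ)) ∣ ((j.val : ℤ) - (k.val : ℤ)) then (p : ℂ) else 0) = p := by
    intro k
    rw [Finset.sum_congr rfl (fun j _ => by rw [if_congr (hdiag k j) rfl rfl, mul_ite, mul_zero])]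
    rw [Finset.sum_ite_eq' Finset.univ k]
    simp only [Finset.mem_univ, if_true]
    have h1 : u (k + m) * (starRingEnd ℂ) (u k) * ((starRingEnd ℂ) (u (k + m)) * u k) = 1 := by
      calc u (k + m) * (starRingEnd ℂ) (u k) * ((starRingEnd ℂ) (u (k + m)) * u k)
          = (u (k+m) * (starRingEnd ℂ) (u (k+m))) * (u k * (starRingEnd ℂ) (u k)) := by ring
        _ = 1 := by rw [hu, hu, one_mul]
    rw [h1, one_mul]
  rw [Finset.sum_congr rfl fun k _ => hinner k]
  simp only [Finset.sum_const, Finset.card_univ, ZMod.card, nsmul_eq_mul]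
  field_simp

end Helpers

theorem cazac_ambiguity_lower_bound
    (p : ℕ) [hp : Fact p.Prime] (hp2 : p ≠ 2) (u : ZMod p → ℂ)
    (hCA : ∀ k : ZMod p, ‖u k‖ = 1)
    (hZAC : ∀ m : ZMod p, m ≠ 0 →
      (1 / (p : ℂ)) * ∑ k : ZMod p, u (m + k) * (starRingEnd ℂ) (u k) = 0) :
    ∃ m n : ZMod p, (m, n) ≠ (0, 0) ∧
      1 / Real.sqrt ((p : ℝ) - 1) ≤ ‖ambig p u m n‖ := by
  haveI := Fact.mk hp.out.one_lt
  have hp3 : 3 ≤ p := by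
    have := hp.out.two_le
    omega
  have hm1 : (1 : ZMod p) ≠ 0 := one_ne_zero
  -- real Parseval
  have hparC := aux_parseval p u hCA 1
  have hpar : ∑ n : ZMod p, Complex.normSq (ambig p u 1 n) = 1 := by
    have : ((∑ n : ZMod p, Complex.normSq (ambig p u 1 n) : ℝ) : ℂ) = ((1 : ℝ) : ℂ) := by
      push_cast
      exact hparC
    exact_mod_cast this
  -- the value at (1, 0) vanishes by ZAC
  have hzero : ambig p u 1 0 = 0 := by
    have h := hZAC 1 hm1
    rw [ambig]
    rw [← h]
    congr 1
    refine Finset.sum_congr rfl fun k _ => ?_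
    rw [add_comm k 1]
    simp [ZMod.val_zero]
  set s : Finset (ZMod p) := Finset.univ.erase 0 with hs
  have hcard : s.card = p - 1 := by
    rw [hs, Finset.card_erase_of_mem (Finset.mem_univ _), Finset.card_univ, ZMod.card]
  have hsum : ∑ n ∈ s, Complex.normSq (ambig p u 1 n) = 1 := by
    have := Finset.sum_erase_add Finset.univ
      (fun n => Complex.normSq (ambig p u 1 n)) (Finset.mem_univ (0 : ZMod p))
    rw [hpar] at this
    rw [hs]
    simpa [hzero] using this
  have hp1pos : (0:ℝ) < (p:ℝ) - 1 := by
    have : (3:ℝ) ≤ p := by exact_mod_cast hp3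
    linarith
  have hex : ∃ n ∈ s, 1 / ((p:ℝ) - 1) ≤ Complex.normSq (ambig p u 1 n) := by
    by_contra hcon
    push_neg at hcon
    have hne : s.Nonempty := ⟨1, by simp [hs, hm1]⟩
    have hlt : ∑ n ∈ s, Complex.normSq (ambig p u 1 n) < ∑ _n ∈ s, 1 / ((p:ℝ) - 1) :=
      Finset.sum_lt_sum_of_nonempty hne hcon
    rw [hsum, Finset.sum_const, hcard, nsmul_eq_mul] at hlt
    have hcast : ((p - 1 : ℕ) : ℝ) = (p : ℝ) - 1 := by
      have : 1 ≤ p := hp.out.one_lt.le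
      push_cast [this]
      ring
    rw [hcast, mul_one_div, div_self (ne_of_gt hp1pos)] at hlt
    exact lt_irrefl 1 hlt
  obtain ⟨n, hns, hn⟩ := hex
  refine ⟨1, n, ?_, ?_⟩
  · intro h
    exact hm1 (congrArg Prod.fst h)
  · rw [Complex.norm_def]
    have h1 : 1 / Real.sqrt ((p:ℝ) - 1) = Real.sqrt (1 / ((p:ℝ) - 1)) := by
      rw [one_div, one_div, Real.sqrt_inv]
    rw [h1]
    exact Real.sqrt_le_sqrt hn
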